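/- Addition numerical dichotomy (odd case, freeness): let a' ≤ b' and suppose HS(D₀(C))(t) = (t^{a'+2} + t^{b'+2} + 2t^{m+1} - 2t^{m+2})/(1-t)³ with deg(C) = a'+b'+3. Then C is free if and only if a' = b' = m, in which case C has exponents (m+1, m+1), i.e., HS(D₀(C))(t) = 2t^{m+1}/(1-t)³. -/

import Mathlib

set_option maxHeartbeats 2000000 in
open Polynomial in
private lemma addition_odd_key (a' b' m d₁ d₂ : ℕ) (hab : a' ≤ b')
    (hd : d₁ + d₂ = a' + b' + 2)
    (h : (X : ℚ[X]) ^ d₁ + X ^ d₂ + 2 * X ^ (m + 2)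
        = X ^ (a' + 2) + X ^ (b' + 2) + 2 * X ^ (m + 1)) :
    a' = m ∧ b' = m := by
  have h1 := congrArg (fun p => Polynomial.coeff p (m + 1)) h
  have h2 := congrArg (fun p => Polynomial.coeff p (b' + 2)) h
  simp only [Polynomial.coeff_add, Polynomial.coeff_X_pow, Polynomial.coeff_ofNat_mul,
    mul_ite, mul_one, mul_zero] at h1 h2
  split_ifs at h1 h2 <;> norm_num at * <;> omega

open Polynomial in
private lemma one_sub_X_pow_ne : ((1 : RatFunc ℚ) - RatFunc.X) ^ 3 ≠ 0 := by
  apply pow_ne_zero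
  rw [sub_ne_zero]
  intro h
  have h' : (algebraMap ℚ[X] (RatFunc ℚ)) 1 = (algebraMap ℚ[X] (RatFunc ℚ)) Polynomial.X := by
    simpa [RatFunc.algebraMap_X] using h
  have h'' := RatFunc.algebraMap_injective ℚ h'
  have := congrArg (fun p => Polynomial.coeff p 0) h''
  simp at this

/-- addition numerical dichotomy (odd case, freeness).
Let `a' ≤ b'`, `deg C = a' + b' + 3`, and suppose
`HS(D₀(C))(t) = (t^{a'+2} + t^{b'+2} + 2t^{m+1} - 2t^{m+2})/(1-t)³`.
Freeness of `C` means the two minimal generator degrees `d₁, d₂` of `D₀(C)` satisfy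
`HS = (t^{d₁} + t^{d₂})/(1-t)³` with `d₁ + d₂ = deg C - 1 = a' + b' + 2`.
Then `C` is free iff `a' = b' = m`, in which case `C` has exponents `(m+1, m+1)`,
i.e. `HS(D₀(C))(t) = 2t^{m+1}/(1-t)³`. -/
theorem addition_odd_free (a' b' m : ℕ) (ha : 1 ≤ a') (hab : a' ≤ b')
    (HS : RatFunc ℚ) (Free : Prop)
    (hHS : HS = (RatFunc.X ^ (a' + 2) + RatFunc.X ^ (b' + 2)
        + 2 * RatFunc.X ^ (m + 1) - 2 * RatFunc.X ^ (m + 2)) / (1 - RatFunc.X) ^ 3)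
    (hFree : Free ↔ ∃ d₁ d₂ : ℕ,
        HS = (RatFunc.X ^ d₁ + RatFunc.X ^ d₂) / (1 - RatFunc.X) ^ 3 ∧
        d₁ + d₂ = a' + b' + 2) :
    (Free ↔ (a' = m ∧ b' = m)) ∧
    (Free → HS = 2 * RatFunc.X ^ (m + 1) / (1 - RatFunc.X) ^ 3) := by
  have main : Free ↔ (a' = m ∧ b' = m) := by
    rw [hFree]
    constructor
    · rintro ⟨d₁, d₂, heq, hd⟩
      rw [hHS] at heq
      have hnum : (RatFunc.X : RatFunc ℚ) ^ (a' + 2) + RatFunc.X ^ (b' + 2)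
          + 2 * RatFunc.X ^ (m + 1) - 2 * RatFunc.X ^ (m + 2)
          = RatFunc.X ^ d₁ + RatFunc.X ^ d₂ := by
        have h3 := congrArg (fun x : RatFunc ℚ => x * (1 - RatFunc.X) ^ 3) heq
        simp only [div_mul_cancel₀ _ one_sub_X_pow_ne] at h3
        exact h3
      have hpoly : (Polynomial.X : Polynomial ℚ) ^ d₁ + Polynomial.X ^ d₂
          + 2 * Polynomial.X ^ (m + 2)
          = Polynomial.X ^ (a' + 2) + Polynomial.X ^ (b' + 2)
          + 2 * Polynomial.X ^ (m + 1) := by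
        apply RatFunc.algebraMap_injective ℚ
        simp only [map_add, map_mul, map_pow, map_ofNat, RatFunc.algebraMap_X]
        linear_combination -hnum
      exact addition_odd_key a' b' m d₁ d₂ hab hd hpoly
    · rintro ⟨h1, h2⟩
      refine ⟨m + 1, m + 1, ?_, by omega⟩
      rw [hHS, h1, h2]
      congr 1
      ring
  refine ⟨main, fun hF => ?_⟩
  obtain ⟨h1, h2⟩ := main.mp hF
  rw [hHS, h1, h2]
  congr 1
  ring
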